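/- Fix an integer m ≥ 0 and let k = 2m + 1. For j ∈ {1, 2} and x ≥ 0, define h_{k,j}(x) as the finite continued fraction h_{k,j}(x) = x + 1/(x + 2/(⋯ + k/(√(k + j/2 + (x/2)²) + x/2))); formally, set b_k(x) = √(k + j/2 + (x/2)²) + x/2 and b_{i-1}(x) = x + i/b_i(x) for i = k, k-1, …, 1, and put h_{k,j}(x) = b_0(x). Then for all x ≥ 0: φ(x)/h_{2m+1,1}(x) < 1 - Φ(x) < φ(x)/h_{2m+1,2}(x) (Shenton's bounds, odd case). -/

import Mathlib

open MeasureTheory Real Set Filter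

/-- Standard Gaussian density. -/
noncomputable def gaussPdf (x : ℝ) : ℝ := Real.exp (-x ^ 2 / 2) / Real.sqrt (2 * Real.pi)

/-- Standard Gaussian distribution function. -/
noncomputable def gaussCdf (x : ℝ) : ℝ := ∫ t in Set.Iic x, gaussPdf t

/-- Finite continued fraction `hcf k g x = x + 1/(x + 2/(⋯ + k/(g x)))`,
with `hcf 0 g = g`. -/
noncomputable def hcf : ℕ → (ℝ → ℝ) → ℝ → ℝ
  | 0, g => g
  | (k + 1), g => hcf k (fun x => x + ((k : ℝ) + 1) / g x)

/-- Auxiliary integrals: `Fi n x = ∫_0^∞ t^n e^{-xt - t²/2} dt`. -/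
noncomputable def Fi (n : ℕ) (x : ℝ) : ℝ :=
  ∫ t in Set.Ioi (0:ℝ), t ^ n * Real.exp (-x * t - t ^ 2 / 2)

/-- Continued fraction evaluated from the inside. -/
noncomputable def Hcf : ℕ → ℝ → ℝ → ℝ
  | 0, _, a => a
  | (k + 1), x, a => Hcf k x (x + ((k : ℝ) + 1) / a)


lemma integrableOn_aux (n : ℕ) (c : ℝ) :
    IntegrableOn (fun t : ℝ => t ^ n * Real.exp (c * t - t ^ 2 / 2)) (Set.Ioi 0) := by
  have hint : IntegrableOn
      (fun t : ℝ => Real.exp (c ^ 2) * (t ^ (n:ℝ) * Real.exp (-(1/4) * t ^ 2))) (Set.Ioi 0) :=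
    (integrableOn_rpow_mul_exp_neg_mul_sq (by norm_num) (lt_of_lt_of_le neg_one_lt_zero (Nat.cast_nonneg n))).const_mul _
  refine Integrable.mono' hint ?_ ?_
  · exact (Continuous.aestronglyMeasurable (by continuity)).restrict
  · filter_upwards [ae_restrict_mem measurableSet_Ioi] with t ht
    have ht0 : (0:ℝ) < t := ht
    rw [Real.norm_eq_abs, abs_mul, abs_of_nonneg (by positivity : (0:ℝ) ≤ t ^ n),
      abs_of_nonneg (Real.exp_pos _).le, Real.rpow_natCast,
      mul_comm (Real.exp (c^2)), mul_assoc, ← Real.exp_add]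
    refine mul_le_mul_of_nonneg_left ?_ (by positivity)
    apply Real.exp_le_exp.2
    nlinarith [sq_nonneg (c - t/2)]

lemma tendsto_aux (n : ℕ) (c : ℝ) :
    Tendsto (fun t : ℝ => t ^ n * Real.exp (c * t - t ^ 2 / 2)) atTop (nhds 0) := by
  have h1 : Tendsto (fun t : ℝ => Real.exp (2*c^2) * (t ^ n * Real.exp (-t))) atTop (nhds 0) := by
    simpa using (tendsto_pow_mul_exp_neg_atTop_nhds_zero n).const_mul (Real.exp (2*c^2))
  refine squeeze_zero_norm' ?_ h1
  filter_upwards [eventually_ge_atTop (0:ℝ), eventually_ge_atTop (max 4 (4*c))] with t ht0 ht4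
  have h4 : (4:ℝ) ≤ t := le_trans (le_max_left _ _) ht4
  have hc : 4*c ≤ t := le_trans (le_max_right _ _) ht4
  rw [Real.norm_eq_abs, abs_mul, abs_of_nonneg (by positivity : (0:ℝ) ≤ t ^ n),
    abs_of_nonneg (Real.exp_pos _).le, mul_comm (Real.exp (2*c^2)), mul_assoc, ← Real.exp_add]
  refine mul_le_mul_of_nonneg_left ?_ (by positivity)
  apply Real.exp_le_exp.2
  nlinarith [sq_nonneg (c - t/4), sq_nonneg t]


lemma Fi_integrable (n : ℕ) (x : ℝ) :
    IntegrableOn (fun t : ℝ => t ^ n * Real.exp (-x * t - t ^ 2 / 2)) (Set.Ioi 0) := by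
  have := integrableOn_aux n (-x)
  simpa using this




lemma Fi_pos (n : ℕ) (x : ℝ) : 0 < Fi n x := by
  rw [Fi, setIntegral_pos_iff_support_of_nonneg_ae]
  · have : (Function.support fun t : ℝ => t ^ n * Real.exp (-x * t - t ^ 2 / 2)) ∩ Ioi 0
        = Ioi 0 := by
      rw [inter_eq_right]
      intro t ht
      exact mul_ne_zero (pow_ne_zero _ (ne_of_gt ht)) (Real.exp_pos _).ne'
    rw [this, volume_Ioi, ← ENNReal.ofReal_zero]
    exact ENNReal.ofReal_lt_top
  · refine eventually_of_mem (self_mem_ae_restrict measurableSet_Ioi) ?_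
    intro t ht
    have : (0:ℝ) < t := ht
    positivity
  · exact Fi_integrable n x

lemma Fi_le_zero (n : ℕ) {x : ℝ} (hx : 0 ≤ x) : Fi n x ≤ Fi n 0 := by
  rw [Fi, Fi]
  refine setIntegral_mono_on (Fi_integrable n x) (Fi_integrable n 0) measurableSet_Ioi ?_
  intro t ht
  have ht0 : (0:ℝ) < t := ht
  refine mul_le_mul_of_nonneg_left ?_ (by positivity)
  apply Real.exp_le_exp.2
  nlinarith

lemma exp_hasDeriv (x t : ℝ) :
    HasDerivAt (fun t : ℝ => Real.exp (-x * t - t ^ 2 / 2))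
      (Real.exp (-x * t - t ^ 2 / 2) * (-x - t)) t := by
  have h1 : HasDerivAt (fun t : ℝ => -x * t - t ^ 2 / 2) (-x - t) t := by
    have := ((hasDerivAt_id t).const_mul (-x)).sub ((hasDerivAt_pow 2 t).div_const 2)
    refine (this).congr_deriv ?_
    ring
  exact h1.exp

lemma Fi_rec0 (x : ℝ) : x * Fi 0 x + Fi 1 x = 1 := by
  have key : (∫ t in Set.Ioi (0:ℝ),
      (-(x * (t ^ 0 * Real.exp (-x * t - t ^ 2 / 2)) + t ^ 1 * Real.exp (-x * t - t ^ 2 / 2))))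
      = 0 - 1 := by
    have := integral_Ioi_of_hasDerivAt_of_tendsto
      (f := fun t : ℝ => Real.exp (-x * t - t ^ 2 / 2))
      (f' := fun t : ℝ => -(x * (t ^ 0 * Real.exp (-x * t - t ^ 2 / 2))
          + t ^ 1 * Real.exp (-x * t - t ^ 2 / 2)))
      (a := 0) (m := 0) ?_ ?_ ?_ ?_
    · simpa using this
    · exact (Continuous.continuousWithinAt (by continuity))
    · intro t _
      refine (exp_hasDeriv x t).congr_deriv ?_
      ring
    · refine (((Fi_integrable 0 x).const_mul x).add (Fi_integrable 1 x)).neg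
    · have := tendsto_aux 0 (-x)
      simpa using this
  rw [integral_neg, integral_add ((Fi_integrable 0 x).const_mul x) (Fi_integrable 1 x),
    integral_const_mul] at key
  have h0 : Fi 0 x = ∫ t in Set.Ioi (0:ℝ), t ^ 0 * Real.exp (-x * t - t ^ 2 / 2) := rfl
  have h1 : Fi 1 x = ∫ t in Set.Ioi (0:ℝ), t ^ 1 * Real.exp (-x * t - t ^ 2 / 2) := rfl
  rw [← h0, ← h1] at key
  linarith

lemma Fi_rec (n : ℕ) (x : ℝ) :
    Fi (n + 2) x = ((n : ℝ) + 1) * Fi n x - x * Fi (n + 1) x := by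
  have key : (∫ t in Set.Ioi (0:ℝ),
      (((n:ℝ) + 1) * (t ^ n * Real.exp (-x * t - t ^ 2 / 2))
        - x * (t ^ (n+1) * Real.exp (-x * t - t ^ 2 / 2))
        - t ^ (n+2) * Real.exp (-x * t - t ^ 2 / 2)))
      = 0 - 0 := by
    have := integral_Ioi_of_hasDerivAt_of_tendsto
      (f := fun t : ℝ => t ^ (n+1) * Real.exp (-x * t - t ^ 2 / 2))
      (f' := fun t : ℝ => ((n:ℝ) + 1) * (t ^ n * Real.exp (-x * t - t ^ 2 / 2))
        - x * (t ^ (n+1) * Real.exp (-x * t - t ^ 2 / 2))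
        - t ^ (n+2) * Real.exp (-x * t - t ^ 2 / 2))
      (a := 0) (m := 0) ?_ ?_ ?_ ?_
    · simpa using this
    · exact (Continuous.continuousWithinAt (by continuity))
    · intro t _
      have := (hasDerivAt_pow (n+1) t).mul (exp_hasDeriv x t)
      refine (this).congr_deriv ?_
      push_cast
      ring
    · exact (((Fi_integrable n x).const_mul _).sub ((Fi_integrable (n+1) x).const_mul x)).sub
        (Fi_integrable (n+2) x)
    · have := tendsto_aux (n+1) (-x)
      simpa using this
  have hA : Integrable (fun t:ℝ => ((n:ℝ)+1) * (t ^ n * Real.exp (-x * t - t ^ 2 / 2)))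
      (volume.restrict (Set.Ioi 0)) := (Fi_integrable n x).const_mul _
  have hB : Integrable (fun t:ℝ => x * (t ^ (n+1) * Real.exp (-x * t - t ^ 2 / 2)))
      (volume.restrict (Set.Ioi 0)) := (Fi_integrable (n+1) x).const_mul x
  have hAB : Integrable (fun t:ℝ => ((n:ℝ)+1) * (t ^ n * Real.exp (-x * t - t ^ 2 / 2))
      - x * (t ^ (n+1) * Real.exp (-x * t - t ^ 2 / 2)))
      (volume.restrict (Set.Ioi 0)) := hA.sub hB
  rw [integral_sub hAB (Fi_integrable (n+2) x), integral_sub hA hB,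
    integral_const_mul, integral_const_mul] at key
  have h0 : Fi n x = ∫ t in Set.Ioi (0:ℝ), t ^ n * Real.exp (-x * t - t ^ 2 / 2) := rfl
  have h1 : Fi (n+1) x = ∫ t in Set.Ioi (0:ℝ), t ^ (n+1) * Real.exp (-x * t - t ^ 2 / 2) := rfl
  have h2 : Fi (n+2) x = ∫ t in Set.Ioi (0:ℝ), t ^ (n+2) * Real.exp (-x * t - t ^ 2 / 2) := rfl
  rw [← h0, ← h1, ← h2] at key
  linarith

lemma Fi_hasDeriv (n : ℕ) (x : ℝ) : HasDerivAt (Fi n) (-(Fi (n + 1) x)) x := by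
  have key := hasDerivAt_integral_of_dominated_loc_of_deriv_le
    (μ := volume.restrict (Set.Ioi (0:ℝ))) (x₀ := x)
    (F := fun y t => t ^ n * Real.exp (-y * t - t ^ 2 / 2))
    (F' := fun y t => -(t ^ (n+1) * Real.exp (-y * t - t ^ 2 / 2)))
    (bound := fun t => t ^ (n+1) * Real.exp ((|x| + 1) * t - t ^ 2 / 2))
    (s := Metric.ball x 1) (Metric.ball_mem_nhds x one_pos) ?_ ?_ ?_ ?_ ?_ ?_
  · have : (∫ t in Set.Ioi (0:ℝ), -(t ^ (n+1) * Real.exp (-x * t - t ^ 2 / 2)))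
        = -(Fi (n+1) x) := by
      rw [integral_neg]; rfl
    rw [this] at key
    exact key.2
  · filter_upwards with y
    exact (Continuous.aestronglyMeasurable (by continuity)).restrict
  · exact Fi_integrable n x
  · exact (Continuous.aestronglyMeasurable (by continuity)).restrict
  · refine eventually_of_mem (self_mem_ae_restrict measurableSet_Ioi) ?_
    intro t ht y hy
    have ht0 : (0:ℝ) < t := ht
    have hy1 : |y - x| < 1 := by simpa [Real.dist_eq] using hy
    rw [norm_neg, Real.norm_eq_abs, abs_mul, abs_of_nonneg (by positivity : (0:ℝ) ≤ t ^ (n+1)),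
      abs_of_nonneg (Real.exp_pos _).le]
    refine mul_le_mul_of_nonneg_left ?_ (by positivity)
    apply Real.exp_le_exp.2
    have : -y ≤ |x| + 1 := by
      have := abs_sub_abs_le_abs_sub y x
      have h2 := neg_abs_le y
      have h3 := abs_sub_abs_le_abs_sub x y
      nlinarith [abs_nonneg y, abs_sub_comm y x, neg_abs_le y, le_abs_self y]
    nlinarith
  · exact integrableOn_aux (n+1) (|x| + 1)
  · refine eventually_of_mem (self_mem_ae_restrict measurableSet_Ioi) ?_
    intro t ht y hy
    have h1 : HasDerivAt (fun y : ℝ => -y * t - t ^ 2 / 2) (-t) y := by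
      have := ((hasDerivAt_id y).neg.mul_const t).sub_const (t ^ 2 / 2)
      refine (this).congr_deriv ?_
      ring
    have h2 := (h1.exp).const_mul (t ^ n)
    refine (h2).congr_deriv ?_
    ring

lemma gaussPdf_eq : gaussPdf = fun t : ℝ =>
    Real.exp (-(1/2 : ℝ) * t ^ 2) * (Real.sqrt (2 * Real.pi))⁻¹ := by
  funext t
  rw [gaussPdf, div_eq_mul_inv, show -t^2/2 = -(1/2:ℝ)*t^2 by ring]

lemma gaussPdf_integrable : Integrable gaussPdf := by
  rw [gaussPdf_eq]
  exact (integrable_exp_neg_mul_sq (by norm_num)).mul_const _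

lemma gaussPdf_total : ∫ t : ℝ, gaussPdf t = 1 := by
  rw [gaussPdf_eq]
  rw [integral_mul_const, integral_gaussian]
  rw [show Real.pi / (1/2) = 2 * Real.pi by ring]
  rw [mul_inv_cancel₀]
  positivity

lemma gaussPdf_pos (x : ℝ) : 0 < gaussPdf x := by
  rw [gaussPdf]; positivity

lemma mills (x : ℝ) : 1 - gaussCdf x = gaussPdf x * Fi 0 x := by
  have h1 : gaussCdf x + ∫ t in Set.Ioi x, gaussPdf t = 1 := by
    rw [gaussCdf, intervalIntegral.integral_Iic_add_Ioi gaussPdf_integrable.integrableOn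
      gaussPdf_integrable.integrableOn, gaussPdf_total]
  have h2 : ∫ t in Set.Ioi x, gaussPdf t = gaussPdf x * Fi 0 x := by
    have emb : MeasurableEmbedding (fun s : ℝ => s + x) :=
      (Homeomorph.addRight x).measurableEmbedding
    have hmap : Measure.map (fun s : ℝ => s + x) volume = volume :=
      map_add_right_eq_self volume x
    have := emb.setIntegral_map (μ := volume) gaussPdf (Set.Ioi x)
    rw [hmap] at this
    have hpre : (fun s : ℝ => s + x) ⁻¹' Set.Ioi x = Set.Ioi 0 := by
      ext s; simp
    rw [hpre] at this
    rw [this]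
    rw [Fi, ← integral_const_mul]
    congr 1
    funext t
    rw [gaussPdf, gaussPdf]
    rw [div_mul_eq_mul_div]
    congr 1
    rw [pow_zero, one_mul, ← Real.exp_add]
    congr 1
    ring
  linarith

lemma gauss_decay (j : ℕ) :
    Tendsto (fun x : ℝ => x ^ j * Real.exp (-x ^ 2 / 2)) atTop (nhds 0) := by
  have := tendsto_aux j 0
  simpa [neg_div] using this

lemma exp_sq_hasDeriv (x : ℝ) :
    HasDerivAt (fun x : ℝ => Real.exp (-x ^ 2 / 2)) (Real.exp (-x ^ 2 / 2) * (-x)) x := by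
  have h : HasDerivAt (fun x : ℝ => -x ^ 2 / 2) (-x) x := by
    have := ((hasDerivAt_pow 2 x).neg).div_const 2
    refine (this).congr_deriv ?_
    ring
  exact h.exp

lemma P_hasDeriv (n : ℕ) (x : ℝ) : HasDerivAt
    (fun x => (((n:ℝ) + 1) * Fi n x ^ 2 - x * Fi n x * Fi (n+1) x - Fi (n+1) x ^ 2)
      * Real.exp (-x ^ 2 / 2))
    (-(Fi n x * Fi (n+1) x * Real.exp (-x ^ 2 / 2))) x := by
  have ha := Fi_hasDeriv n x
  have hb := Fi_hasDeriv (n+1) x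
  have h1 := (ha.pow 2).const_mul ((n:ℝ) + 1)
  have h2 := ((hasDerivAt_id' (x := x)).mul ha).mul hb
  have h3 := hb.pow 2
  have hP := ((h1.sub h2).sub h3).mul (exp_sq_hasDeriv x)
  refine (hP).congr_deriv ?_
  rw [Fi_rec n x]
  push_cast
  simp only [Pi.mul_apply, Pi.sub_apply, Pi.pow_apply]
  ring

lemma P_pos (n : ℕ) {x : ℝ} (hx : 0 ≤ x) :
    Fi (n + 1) x ^ 2 + x * Fi n x * Fi (n + 1) x < ((n : ℝ) + 1) * Fi n x ^ 2 := by
  set P : ℝ → ℝ := fun x => (((n:ℝ) + 1) * Fi n x ^ 2 - x * Fi n x * Fi (n+1) x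
      - Fi (n+1) x ^ 2) * Real.exp (-x ^ 2 / 2) with hPdef
  have hderiv : ∀ y : ℝ, HasDerivAt P (-(Fi n y * Fi (n+1) y * Real.exp (-y ^ 2 / 2))) y :=
    fun y => P_hasDeriv n y
  have hanti : StrictAnti P := by
    refine strictAnti_of_deriv_neg (fun y => ?_)
    rw [(hderiv y).deriv]
    have h1 := Fi_pos n y
    have h2 := Fi_pos (n+1) y
    have h3 := Real.exp_pos (-y ^ 2 / 2)
    have := mul_pos (mul_pos h1 h2) h3
    linarith
  have htend : Tendsto P atTop (nhds 0) := by
    have hg : Tendsto (fun y : ℝ =>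
        (((n:ℝ) + 1) * Fi n 0 ^ 2 + Fi n 0 * Fi (n+1) 0 + Fi (n+1) 0 ^ 2)
          * (Real.exp (-y ^ 2 / 2) + y ^ 1 * Real.exp (-y ^ 2 / 2))) atTop (nhds 0) := by
      have h0 := gauss_decay 0
      have h1 := gauss_decay 1
      have := (h0.add h1).const_mul
        (((n:ℝ) + 1) * Fi n 0 ^ 2 + Fi n 0 * Fi (n+1) 0 + Fi (n+1) 0 ^ 2)
      simpa using this
    refine squeeze_zero_norm' ?_ hg
    filter_upwards [eventually_ge_atTop (0:ℝ)] with y hy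
    have e1 := Fi_pos n y
    have e2 := Fi_pos (n+1) y
    have e3 := Fi_le_zero n hy
    have e4 := Fi_le_zero (n+1) hy
    have e0 := Fi_pos n 0
    have e5 := Fi_pos (n+1) 0
    have hexp := Real.exp_pos (-y ^ 2 / 2)
    rw [hPdef, Real.norm_eq_abs, abs_mul, abs_of_nonneg hexp.le]
    have hM : |((n:ℝ) + 1) * Fi n y ^ 2 - y * Fi n y * Fi (n+1) y - Fi (n+1) y ^ 2|
        ≤ ((n:ℝ)+1) * Fi n 0 ^ 2 + y * (Fi n 0 * Fi (n+1) 0) + Fi (n+1) 0 ^ 2 :=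
      by
      have m1 : Fi n y * Fi (n+1) y ≤ Fi n 0 * Fi (n+1) 0 := mul_le_mul e3 e4 e2.le e0.le
      have m2 : Fi n y ^ 2 ≤ Fi n 0 ^ 2 := by nlinarith
      have m3 : Fi (n+1) y ^ 2 ≤ Fi (n+1) 0 ^ 2 := by nlinarith
      have m4 : y * (Fi n y * Fi (n+1) y) ≤ y * (Fi n 0 * Fi (n+1) 0) :=
        mul_le_mul_of_nonneg_left m1 hy
      have m5 : ((n:ℝ)+1) * Fi n y ^ 2 ≤ ((n:ℝ)+1) * Fi n 0 ^ 2 :=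
        mul_le_mul_of_nonneg_left m2 (by positivity)
      have m6 : 0 ≤ y * (Fi n y * Fi (n+1) y) := mul_nonneg hy (mul_pos e1 e2).le
      exact abs_le.2 ⟨by nlinarith, by nlinarith⟩
    calc |((n:ℝ) + 1) * Fi n y ^ 2 - y * Fi n y * Fi (n+1) y - Fi (n+1) y ^ 2|
          * Real.exp (-y ^ 2 / 2)
        ≤ (((n:ℝ)+1) * Fi n 0 ^ 2 + y * (Fi n 0 * Fi (n+1) 0) + Fi (n+1) 0 ^ 2)
          * Real.exp (-y ^ 2 / 2) := mul_le_mul_of_nonneg_right hM hexp.le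
      _ ≤ _ := by
          have k1 : 0 < Fi n 0 * Fi (n+1) 0 := mul_pos e0 e5
          have k2 : Fi n 0 * Fi (n+1) 0 * (y * Real.exp (-y ^ 2 / 2))
              ≤ (((n:ℝ)+1) * Fi n 0 ^ 2 + Fi n 0 * Fi (n+1) 0 + Fi (n+1) 0 ^ 2)
                * (y * Real.exp (-y ^ 2 / 2)) := by
            refine mul_le_mul_of_nonneg_right ?_ (mul_nonneg hy hexp.le)
            nlinarith [sq_nonneg (Fi n 0), sq_nonneg (Fi (n+1) 0)]
          nlinarith [mul_pos k1 hexp]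
  have h1 : 0 ≤ P (x + 1) := by
    refine le_of_tendsto htend ?_
    filter_upwards [eventually_ge_atTop (x + 1)] with y hy
    rcases eq_or_lt_of_le hy with h | h
    · exact le_of_eq (by rw [h])
    · exact (hanti h).le
  have h2 : 0 < P x := lt_of_le_of_lt h1 (hanti (by linarith))
  rw [hPdef] at h2
  have hexp := Real.exp_pos (-x ^ 2 / 2)
  simp only at h2
  rcases mul_pos_iff.1 h2 with ⟨ha, _⟩ | ⟨_, hb⟩
  · linarith
  · linarith

lemma Q_hasDeriv (n : ℕ) (x : ℝ) : HasDerivAt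
    (fun x => ((2*(n:ℝ) + 1) * Fi n x ^ 2 - 2 * x * Fi n x * Fi (n+1) x - 2 * Fi (n+1) x ^ 2)
      * Real.exp (-x ^ 2 / 2))
    (x * Fi n x ^ 2 * Real.exp (-x ^ 2 / 2)) x := by
  have ha := Fi_hasDeriv n x
  have hb := Fi_hasDeriv (n+1) x
  have h1 := (ha.pow 2).const_mul (2*(n:ℝ) + 1)
  have h2 := (((hasDerivAt_id' (x := x)).const_mul (2:ℝ)).mul ha).mul hb
  have h3 := (hb.pow 2).const_mul (2:ℝ)
  have hQ := ((h1.sub h2).sub h3).mul (exp_sq_hasDeriv x)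
  refine (hQ).congr_deriv ?_
  rw [Fi_rec n x]
  push_cast
  simp only [Pi.mul_apply, Pi.sub_apply, Pi.pow_apply]
  ring

lemma Q_neg (n : ℕ) {x : ℝ} (hx : 0 ≤ x) :
    (2 * (n : ℝ) + 1) * Fi n x ^ 2 < 2 * (Fi (n + 1) x ^ 2 + x * Fi n x * Fi (n + 1) x) := by
  set Q : ℝ → ℝ := fun x => ((2*(n:ℝ) + 1) * Fi n x ^ 2 - 2 * x * Fi n x * Fi (n+1) x
      - 2 * Fi (n+1) x ^ 2) * Real.exp (-x ^ 2 / 2) with hQdef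
  have hderiv : ∀ y : ℝ, HasDerivAt Q (y * Fi n y ^ 2 * Real.exp (-y ^ 2 / 2)) y :=
    fun y => Q_hasDeriv n y
  have hmono : StrictMonoOn Q (Set.Ici x) := by
    refine strictMonoOn_of_deriv_pos (convex_Ici x) ?_ ?_
    · exact fun y _ => (hderiv y).differentiableAt.continuousAt.continuousWithinAt
    · intro y hy
      rw [interior_Ici] at hy
      rw [(hderiv y).deriv]
      have hy0 : 0 < y := lt_of_le_of_lt hx hy
      have := Fi_pos n y
      positivity
  have htend : Tendsto Q atTop (nhds 0) := by
    have hg : Tendsto (fun y : ℝ =>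
        ((2*(n:ℝ) + 1) * Fi n 0 ^ 2 + 2 * (Fi n 0 * Fi (n+1) 0) + 2 * Fi (n+1) 0 ^ 2)
          * (Real.exp (-y ^ 2 / 2) + y ^ 1 * Real.exp (-y ^ 2 / 2))) atTop (nhds 0) := by
      have h0 := gauss_decay 0
      have h1 := gauss_decay 1
      have := (h0.add h1).const_mul
        ((2*(n:ℝ) + 1) * Fi n 0 ^ 2 + 2 * (Fi n 0 * Fi (n+1) 0) + 2 * Fi (n+1) 0 ^ 2)
      simpa using this
    refine squeeze_zero_norm' ?_ hg
    filter_upwards [eventually_ge_atTop (0:ℝ)] with y hy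
    have e1 := Fi_pos n y
    have e2 := Fi_pos (n+1) y
    have e3 := Fi_le_zero n hy
    have e4 := Fi_le_zero (n+1) hy
    have e0 := Fi_pos n 0
    have e5 := Fi_pos (n+1) 0
    have hexp := Real.exp_pos (-y ^ 2 / 2)
    rw [hQdef, Real.norm_eq_abs, abs_mul, abs_of_nonneg hexp.le]
    have m1 : Fi n y * Fi (n+1) y ≤ Fi n 0 * Fi (n+1) 0 := mul_le_mul e3 e4 e2.le e0.le
    have m2 : Fi n y ^ 2 ≤ Fi n 0 ^ 2 := by nlinarith
    have m3 : Fi (n+1) y ^ 2 ≤ Fi (n+1) 0 ^ 2 := by nlinarith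
    have m4 : y * (Fi n y * Fi (n+1) y) ≤ y * (Fi n 0 * Fi (n+1) 0) :=
      mul_le_mul_of_nonneg_left m1 hy
    have m6 : 0 ≤ y * (Fi n y * Fi (n+1) y) := mul_nonneg hy (mul_pos e1 e2).le
    have hM : |(2*(n:ℝ) + 1) * Fi n y ^ 2 - 2 * y * Fi n y * Fi (n+1) y - 2 * Fi (n+1) y ^ 2|
        ≤ (2*(n:ℝ) + 1) * Fi n 0 ^ 2 + y * (2 * (Fi n 0 * Fi (n+1) 0)) + 2 * Fi (n+1) 0 ^ 2 :=
      abs_le.2 ⟨by nlinarith, by nlinarith⟩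
    calc |(2*(n:ℝ) + 1) * Fi n y ^ 2 - 2 * y * Fi n y * Fi (n+1) y - 2 * Fi (n+1) y ^ 2|
          * Real.exp (-y ^ 2 / 2)
        ≤ ((2*(n:ℝ) + 1) * Fi n 0 ^ 2 + y * (2 * (Fi n 0 * Fi (n+1) 0)) + 2 * Fi (n+1) 0 ^ 2)
          * Real.exp (-y ^ 2 / 2) := mul_le_mul_of_nonneg_right hM hexp.le
      _ ≤ _ := by
          have k1 : 0 < Fi n 0 * Fi (n+1) 0 := mul_pos e0 e5
          have k2 : 2 * (Fi n 0 * Fi (n+1) 0) * (y * Real.exp (-y ^ 2 / 2))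
              ≤ ((2*(n:ℝ) + 1) * Fi n 0 ^ 2 + 2 * (Fi n 0 * Fi (n+1) 0) + 2 * Fi (n+1) 0 ^ 2)
                * (y * Real.exp (-y ^ 2 / 2)) := by
            refine mul_le_mul_of_nonneg_right ?_ (mul_nonneg hy hexp.le)
            nlinarith [sq_nonneg (Fi n 0), sq_nonneg (Fi (n+1) 0)]
          nlinarith [mul_pos k1 hexp]
  have h1 : Q (x + 1) ≤ 0 := by
    refine ge_of_tendsto htend ?_
    filter_upwards [eventually_ge_atTop (x + 1)] with y hy
    rcases eq_or_lt_of_le hy with h | h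
    · exact le_of_eq (by rw [h])
    · exact (hmono (by simp) (by simp; linarith) h).le
  have h2 : Q x < 0 := lt_of_lt_of_le
    (hmono (Set.self_mem_Ici) (by simp) (by linarith)) h1
  rw [hQdef] at h2
  have hexp := Real.exp_pos (-x ^ 2 / 2)
  simp only at h2
  rcases mul_neg_iff.1 h2 with ⟨_, hb⟩ | ⟨ha, _⟩
  · linarith
  · linarith

lemma Hcf_pos (k : ℕ) {x a : ℝ} (hx : 0 ≤ x) (ha : 0 < a) : 0 < Hcf k x a := by
  induction k generalizing a with
  | zero => exact ha
  | succ k ih => exact ih (by positivity)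

lemma Hcf_mono (k : ℕ) {x : ℝ} (hx : 0 ≤ x) : ∀ {a b : ℝ}, 0 < a → a < b →
    (Even k → Hcf k x a < Hcf k x b) ∧ (Odd k → Hcf k x b < Hcf k x a) := by
  induction k with
  | zero =>
    intro a b ha hab
    exact ⟨fun _ => hab, fun h => absurd h (by simp [Nat.odd_iff])⟩
  | succ k ih =>
    intro a b ha hab
    have hb : 0 < b := lt_trans ha hab
    have h1 : x + ((k:ℝ)+1)/b < x + ((k:ℝ)+1)/a := by
      have : ((k:ℝ)+1)/b < ((k:ℝ)+1)/a := div_lt_div_of_pos_left (by positivity) ha hab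
      linarith
    have h2 : 0 < x + ((k:ℝ)+1)/b := by positivity
    have key := ih h2 h1
    constructor
    · intro hek
      have hok : Odd k := by
        rcases Nat.even_or_odd k with h | h
        · exact absurd (by simpa [Nat.even_add_one] using hek) (by simpa using h)
        · exact h
      exact key.2 hok
    · intro hok
      have hek : Even k := by
        rcases Nat.even_or_odd k with h | h
        · exact h
        · exact absurd hok (by simp [Nat.even_add_one, Nat.odd_iff, Nat.even_iff] at *; omega)
      exact key.1 hek

lemma Hcf_exact (k : ℕ) (x : ℝ) :
    Hcf k x (x + Fi (k + 1) x / Fi k x) = 1 / Fi 0 x := by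
  induction k with
  | zero =>
    have h0 := (Fi_pos 0 x).ne'
    simp only [Hcf]
    rw [eq_div_iff h0]
    have := Fi_rec0 x
    field_simp
    linarith
  | succ k ih =>
    have hk := (Fi_pos k x).ne'
    have hk1 := (Fi_pos (k+1) x).ne'
    have hk1p := Fi_pos (k+1) x
    have hkp := Fi_pos k x
    simp only [Hcf]
    have e1 : x + Fi (k+2) x / Fi (k+1) x = ((k:ℝ)+1) * Fi k x / Fi (k+1) x := by
      rw [Fi_rec]
      field_simp
      ring
    rw [e1]
    have e2 : x + ((k:ℝ)+1) / (((k:ℝ)+1) * Fi k x / Fi (k+1) x)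
        = x + Fi (k+1) x / Fi k x := by
      have hkk : ((k:ℝ)+1) ≠ 0 := by positivity
      field_simp
    rw [e2, ih]

lemma hcf_eq_Hcf (k : ℕ) (g : ℝ → ℝ) (x : ℝ) : hcf k g x = Hcf k x (g x) := by
  induction k generalizing g with
  | zero => rfl
  | succ k ih => exact ih _

/-- Shenton's bounds, odd case: φ/h_{2m+1,1} < 1 - Φ < φ/h_{2m+1,2} on [0,∞). -/
theorem shenton_bounds_odd (m : ℕ) (x : ℝ) (hx : 0 ≤ x) :
    gaussPdf x /
        hcf (2 * m + 1)
          (fun t => Real.sqrt ((2 * m + 1 : ℝ) + 1 / 2 + (t / 2) ^ 2) + t / 2) x <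
      1 - gaussCdf x ∧
    1 - gaussCdf x <
      gaussPdf x /
        hcf (2 * m + 1)
          (fun t => Real.sqrt ((2 * m + 1 : ℝ) + 2 / 2 + (t / 2) ^ 2) + t / 2) x := by
  set k := 2 * m + 1 with hk
  have hodd : Odd k := ⟨m, by omega⟩
  set a := Fi k x with hadef
  set b := Fi (k + 1) x with hbdef
  have ha : 0 < a := Fi_pos k x
  have hb : 0 < b := Fi_pos (k + 1) x
  have hP : b ^ 2 + x * a * b < ((k : ℝ) + 1) * a ^ 2 := P_pos k hx
  have hQ : (2 * (k : ℝ) + 1) * a ^ 2 < 2 * (b ^ 2 + x * a * b) := Q_neg k hx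
  have hkcast : ((k : ℝ)) = 2 * (m : ℝ) + 1 := by push_cast [hk]; ring
  -- the exact tail
  have htail : 0 < x + b / a := by positivity
  -- upper comparison of tails : x + b/a < g₂ x
  have hg2 : x + b / a < Real.sqrt ((2 * m + 1 : ℝ) + 2 / 2 + (x / 2) ^ 2) + x / 2 := by
    have h1 : x / 2 + b / a < Real.sqrt ((2 * m + 1 : ℝ) + 2 / 2 + (x / 2) ^ 2) := by
      rw [Real.lt_sqrt (by positivity)]
      have hdiv : (x / 2 + b / a) ^ 2 = (x / 2) ^ 2 + (b ^ 2 + x * a * b) / a ^ 2 := by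
        field_simp
        ring
      rw [hdiv]
      have : (b ^ 2 + x * a * b) / a ^ 2 < (k : ℝ) + 1 := by
        rw [div_lt_iff₀ (by positivity)]
        linarith
      rw [hkcast] at this
      linarith
    linarith
  -- lower comparison of tails : g₁ x < x + b/a
  have hg1 : Real.sqrt ((2 * m + 1 : ℝ) + 1 / 2 + (x / 2) ^ 2) + x / 2 < x + b / a := by
    have h1 : Real.sqrt ((2 * m + 1 : ℝ) + 1 / 2 + (x / 2) ^ 2) < x / 2 + b / a := by
      rw [Real.sqrt_lt' (by positivity)]
      have hdiv : (x / 2 + b / a) ^ 2 = (x / 2) ^ 2 + (b ^ 2 + x * a * b) / a ^ 2 := by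
        field_simp
        ring
      rw [hdiv]
      have : (2 * (k : ℝ) + 1) / 2 < (b ^ 2 + x * a * b) / a ^ 2 := by
        rw [div_lt_div_iff₀ (by norm_num) (by positivity)]
        nlinarith
      rw [hkcast] at this
      linarith
    linarith
  have hg1pos : 0 < Real.sqrt ((2 * m + 1 : ℝ) + 1 / 2 + (x / 2) ^ 2) + x / 2 := by
    have : 0 < Real.sqrt ((2 * m + 1 : ℝ) + 1 / 2 + (x / 2) ^ 2) :=
      Real.sqrt_pos.2 (by positivity)
    linarith
  have hg2pos : 0 < Real.sqrt ((2 * m + 1 : ℝ) + 2 / 2 + (x / 2) ^ 2) + x / 2 := by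
    have : 0 < Real.sqrt ((2 * m + 1 : ℝ) + 2 / 2 + (x / 2) ^ 2) :=
      Real.sqrt_pos.2 (by positivity)
    linarith
  have hexact : Hcf k x (x + b / a) = 1 / Fi 0 x := Hcf_exact k x
  have hF0 : 0 < Fi 0 x := Fi_pos 0 x
  have hpdf := gaussPdf_pos x
  constructor
  · -- lower bound
    rw [hcf_eq_Hcf, mills]
    have hH1 : 1 / Fi 0 x
        < Hcf k x (Real.sqrt ((2 * m + 1 : ℝ) + 1 / 2 + (x / 2) ^ 2) + x / 2) := by
      rw [← hexact]
      exact (Hcf_mono k hx hg1pos hg1).2 hodd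
    have h0 : 0 < (1:ℝ) / Fi 0 x := by positivity
    calc gaussPdf x / Hcf k x (Real.sqrt ((2 * m + 1 : ℝ) + 1 / 2 + (x / 2) ^ 2) + x / 2)
        < gaussPdf x / (1 / Fi 0 x) := div_lt_div_of_pos_left hpdf h0 hH1
      _ = gaussPdf x * Fi 0 x := by rw [one_div, div_inv_eq_mul]
  · -- upper bound
    rw [hcf_eq_Hcf, mills]
    have hH2 : Hcf k x (Real.sqrt ((2 * m + 1 : ℝ) + 2 / 2 + (x / 2) ^ 2) + x / 2)
        < 1 / Fi 0 x := by
      rw [← hexact]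
      exact (Hcf_mono k hx htail hg2).2 hodd
    have hH2pos : 0 < Hcf k x (Real.sqrt ((2 * m + 1 : ℝ) + 2 / 2 + (x / 2) ^ 2) + x / 2) :=
      Hcf_pos k hx hg2pos
    calc gaussPdf x * Fi 0 x = gaussPdf x / (1 / Fi 0 x) := by rw [one_div, div_inv_eq_mul]
      _ < gaussPdf x / Hcf k x (Real.sqrt ((2 * m + 1 : ℝ) + 2 / 2 + (x / 2) ^ 2) + x / 2) :=
          div_lt_div_of_pos_left hpdf hH2pos hH2
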